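/- Let P, Q ∈ ℤ[n] be distinct polynomials with positive leading coefficients and zero constant terms, with max(deg P, deg Q) > 1. Then there exists a 2-coloring φ: ℕ → {1,2} such that for every i ∈ {1,2} and every n ∈ ℕ, the set {m ∈ ℕ : φ(n + P(m)) = φ(n + Q(m)) = i} is finite (possibly empty). -/

import Mathlib

open Polynomial Filter

/-! ## Auxiliary recursive coloring -/

open Classical in
noncomputable def twoColAux (S T : Polynomial ℤ) (ψ : ℕ → ℕ) : ℕ → ℕ → ℕ
  | 0, _ => 1
  | fuel + 1, x =>
    if h : ∃ p : ℕ × ℕ, ψ p.1 ≤ p.2 ∧ (x : ℤ) = (p.1 : ℤ) + S.eval (p.2 : ℤ) then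
      3 - twoColAux S T ψ fuel (((h.choose.1 : ℤ) + T.eval (h.choose.2 : ℤ)).toNat)
    else 1

noncomputable def twoCol (S T : Polynomial ℤ) (ψ : ℕ → ℕ) (x : ℕ) : ℕ :=
  twoColAux S T ψ (x + 1) x

section Col

variable (S T : Polynomial ℤ) (ψ : ℕ → ℕ)

def HPsi : Prop :=
  ∀ n m : ℕ, ψ n ≤ m →
    (n : ℤ) ≤ (m : ℤ) ∧ 0 ≤ T.eval (m : ℤ) ∧ T.eval (m : ℤ) + 1 ≤ S.eval (m : ℤ) ∧
      S.eval (m : ℤ) + ((n : ℤ) + 1) ≤ S.eval ((m : ℤ) + 1)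

variable {S T ψ}

lemma partner_lt (H : HPsi S T ψ) {x : ℕ}
    (h : ∃ p : ℕ × ℕ, ψ p.1 ≤ p.2 ∧ (x : ℤ) = (p.1 : ℤ) + S.eval (p.2 : ℤ)) :
    (((h.choose.1 : ℤ) + T.eval (h.choose.2 : ℤ)).toNat) < x := by
  obtain ⟨hc1, hc2⟩ := h.choose_spec
  obtain ⟨-, hT0, hTS, -⟩ := H _ _ hc1
  have hn : (0 : ℤ) ≤ (h.choose.1 : ℤ) := Int.natCast_nonneg _
  have h0 : (0 : ℤ) ≤ (h.choose.1 : ℤ) + T.eval (h.choose.2 : ℤ) := by linarith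
  have hlt : (h.choose.1 : ℤ) + T.eval (h.choose.2 : ℤ) < (x : ℤ) := by linarith
  have htn := Int.toNat_of_nonneg h0
  have : ((((h.choose.1 : ℤ) + T.eval (h.choose.2 : ℤ)).toNat : ℕ) : ℤ) < (x : ℤ) := by
    rw [htn]; exact hlt
  exact_mod_cast this

lemma no_match_zero (H : HPsi S T ψ)
    (h : ∃ p : ℕ × ℕ, ψ p.1 ≤ p.2 ∧ ((0 : ℕ) : ℤ) = (p.1 : ℤ) + S.eval (p.2 : ℤ)) : False := by
  obtain ⟨p, hp1, hp2⟩ := h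
  obtain ⟨-, hT0, hTS, -⟩ := H _ _ hp1
  have hn : (0 : ℤ) ≤ (p.1 : ℤ) := Int.natCast_nonneg _
  have : ((0 : ℕ) : ℤ) = 0 := rfl
  rw [this] at hp2
  linarith

lemma twoColAux_stable (H : HPsi S T ψ) :
    ∀ fuel fuel' x : ℕ, x ≤ fuel → x ≤ fuel' →
      twoColAux S T ψ fuel x = twoColAux S T ψ fuel' x := by
  intro fuel
  induction fuel with
  | zero =>
    intro fuel' x hx _
    have hx0 : x = 0 := by omega
    subst hx0
    cases fuel' with
    | zero => rfl
    | succ f' =>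
      rw [twoColAux, twoColAux, dif_neg]
      exact fun h => no_match_zero H h
  | succ f ih =>
    intro fuel' x hx hx'
    cases fuel' with
    | zero =>
      have hx0 : x = 0 := by omega
      subst hx0
      rw [twoColAux, twoColAux, dif_neg]
      exact fun h => no_match_zero H h
    | succ f' =>
      rw [twoColAux, twoColAux]
      by_cases h : ∃ p : ℕ × ℕ, ψ p.1 ≤ p.2 ∧ (x : ℤ) = (p.1 : ℤ) + S.eval (p.2 : ℤ)
      · rw [dif_pos h, dif_pos h]
        have hy := partner_lt H h
        rw [ih f' _ (by omega) (by omega)]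
      · rw [dif_neg h, dif_neg h]

lemma twoCol_pos (H : HPsi S T ψ) {x : ℕ}
    (h : ∃ p : ℕ × ℕ, ψ p.1 ≤ p.2 ∧ (x : ℤ) = (p.1 : ℤ) + S.eval (p.2 : ℤ)) :
    twoCol S T ψ x = 3 - twoCol S T ψ (((h.choose.1 : ℤ) + T.eval (h.choose.2 : ℤ)).toNat) := by
  have hy := partner_lt H h
  unfold twoCol
  rw [twoColAux, dif_pos h,
    twoColAux_stable H x (((h.choose.1 : ℤ) + T.eval (h.choose.2 : ℤ)).toNat + 1) _
      (by omega) (by omega)]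

lemma twoCol_neg {x : ℕ}
    (h : ¬ ∃ p : ℕ × ℕ, ψ p.1 ≤ p.2 ∧ (x : ℤ) = (p.1 : ℤ) + S.eval (p.2 : ℤ)) :
    twoCol S T ψ x = 1 := by
  unfold twoCol
  rw [twoColAux, dif_neg h]

lemma twoCol_mem (H : HPsi S T ψ) : ∀ x, twoCol S T ψ x = 1 ∨ twoCol S T ψ x = 2 := by
  intro x
  induction x using Nat.strong_induction_on with
  | _ x ih =>
    by_cases h : ∃ p : ℕ × ℕ, ψ p.1 ≤ p.2 ∧ (x : ℤ) = (p.1 : ℤ) + S.eval (p.2 : ℤ)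
    · rw [twoCol_pos H h]
      rcases ih _ (partner_lt H h) with h1 | h1 <;> rw [h1] <;> omega
    · rw [twoCol_neg h]
      left; rfl

lemma eval_mono (H : HPsi S T ψ) {n m : ℕ} (h : ψ n ≤ m) :
    ∀ k : ℕ, m + 1 ≤ k → S.eval ((m : ℤ) + 1) ≤ S.eval (k : ℤ) := by
  intro k
  induction k with
  | zero => intro hk; exact absurd hk (by omega)
  | succ k ihk =>
    intro hk
    have hcast : ((k + 1 : ℕ) : ℤ) = (k : ℤ) + 1 := by push_cast; ring
    by_cases hc : m + 1 ≤ k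
    · have h2 := (H n k (le_trans h (by omega))).2.2.2
      have h4 : (0 : ℤ) ≤ (n : ℤ) := Int.natCast_nonneg n
      rw [hcast]
      linarith [ihk hc]
    · have hkm : k = m := by omega
      subst hkm
      rw [hcast]

lemma inj_lt (H : HPsi S T ψ) {n m n' m' : ℕ} (h : ψ n ≤ m) (h' : ψ n' ≤ m')
    (hm : m < m') : (n : ℤ) + S.eval (m : ℤ) < (n' : ℤ) + S.eval (m' : ℤ) := by
  have h1 := (H n m h).2.2.2
  have h2 := eval_mono H h m' (by omega)
  have h3 : (0 : ℤ) ≤ (n' : ℤ) := Int.natCast_nonneg n'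
  linarith

lemma inj_pair (H : HPsi S T ψ) {n m n' m' : ℕ} (h : ψ n ≤ m) (h' : ψ n' ≤ m')
    (he : (n : ℤ) + S.eval (m : ℤ) = (n' : ℤ) + S.eval (m' : ℤ)) : n = n' ∧ m = m' := by
  rcases lt_trichotomy m m' with hm | hm | hm
  · exact absurd he (ne_of_lt (inj_lt H h h' hm))
  · subst hm
    have : (n : ℤ) = (n' : ℤ) := by linarith
    exact ⟨by exact_mod_cast this, rfl⟩
  · exact absurd he.symm (ne_of_lt (inj_lt H h' h hm))

lemma twoCol_key (H : HPsi S T ψ) (n m : ℕ) (h : ψ n ≤ m) :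
    twoCol S T ψ (((n : ℤ) + S.eval (m : ℤ)).toNat) ≠
      twoCol S T ψ (((n : ℤ) + T.eval (m : ℤ)).toNat) := by
  obtain ⟨-, hT0, hTS, -⟩ := H n m h
  have hn : (0 : ℤ) ≤ (n : ℤ) := Int.natCast_nonneg n
  have hx0 : (0 : ℤ) ≤ (n : ℤ) + S.eval (m : ℤ) := by linarith
  have hx : ((((n : ℤ) + S.eval (m : ℤ)).toNat : ℕ) : ℤ) = (n : ℤ) + S.eval (m : ℤ) :=
    Int.toNat_of_nonneg hx0
  have hex : ∃ p : ℕ × ℕ, ψ p.1 ≤ p.2 ∧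
      ((((n : ℤ) + S.eval (m : ℤ)).toNat : ℕ) : ℤ) = (p.1 : ℤ) + S.eval (p.2 : ℤ) :=
    ⟨(n, m), h, hx⟩
  rw [twoCol_pos H hex]
  obtain ⟨hc1, hc2⟩ := hex.choose_spec
  have heq : (hex.choose.1 : ℤ) + S.eval (hex.choose.2 : ℤ) = (n : ℤ) + S.eval (m : ℤ) := by
    rw [← hc2, hx]
  obtain ⟨e1, e2⟩ := inj_pair H hc1 h heq
  have hpair : (hex.choose.1 : ℤ) + T.eval (hex.choose.2 : ℤ) = (n : ℤ) + T.eval (m : ℤ) := by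
    rw [e1, e2]
  rw [hpair]
  rcases twoCol_mem H (((n : ℤ) + T.eval (m : ℤ)).toNat) with h1 | h1 <;>
    rw [h1] <;> omega

end Col

/-! ## Analytic facts -/

lemma keyTendstoR (p : Polynomial ℤ) (h1 : 0 < p.leadingCoeff) (h2 : 1 ≤ p.natDegree) :
    Tendsto (fun x : ℝ => (p.map (Int.castRingHom ℝ)).eval x) atTop atTop := by
  apply Polynomial.tendsto_atTop_of_leadingCoeff_nonneg
  · rw [degree_map_eq_of_injective (f := Int.castRingHom ℝ) Int.cast_injective]
    exact natDegree_pos_iff_degree_pos.1 h2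
  · rw [Polynomial.leadingCoeff_map_of_injective (f := Int.castRingHom ℝ) Int.cast_injective]
    show (0 : ℝ) ≤ ((p.leadingCoeff : ℤ) : ℝ)
    exact_mod_cast h1.le

lemma keyTendstoZ (p : Polynomial ℤ) (h1 : 0 < p.leadingCoeff) (h2 : 1 ≤ p.natDegree) :
    Tendsto (fun m : ℕ => p.eval (m : ℤ)) atTop atTop := by
  have h := (keyTendstoR p h1 h2).comp (tendsto_natCast_atTop_atTop (R := ℝ))
  rw [tendsto_atTop] at h ⊢
  intro b
  filter_upwards [h (b : ℝ)] with m hm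
  have hcast : ((p.eval ((m : ℕ) : ℤ) : ℤ) : ℝ) =
      (p.map (Int.castRingHom ℝ)).eval (((m : ℕ) : ℤ) : ℝ) := by
    rw [eval_intCast_map]; rfl
  have hb : (b : ℝ) ≤ ((p.eval ((m : ℕ) : ℤ) : ℤ) : ℝ) := by
    rw [hcast]
    have : (((m : ℕ) : ℤ) : ℝ) = ((m : ℕ) : ℝ) := by push_cast; ring
    rw [this]
    exact hm
  exact_mod_cast hb

lemma gapTendsto (S : Polynomial ℤ) (h1 : 0 < S.leadingCoeff) (h2 : 2 ≤ S.natDegree) :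
    Tendsto (fun m : ℕ => S.eval ((m : ℤ) + 1) - S.eval (m : ℤ)) atTop atTop := by
  set d := S.natDegree with hd
  have hdc : (derivative S).coeff (d - 1) = S.coeff d * (d : ℤ) := by
    rw [coeff_derivative]
    have e1 : d - 1 + 1 = d := by omega
    rw [e1]
    congr 1
    push_cast [e1]
    ring_nf
    rw [show ((d - 1 : ℕ) : ℤ) = (d : ℤ) - 1 by
      have : (1 : ℕ) ≤ d := by omega
      push_cast [this]; ring]
    ring
  have hSlc : S.coeff d = S.leadingCoeff := rfl
  have hdpos : (0 : ℤ) < (d : ℤ) := by exact_mod_cast (by omega : 0 < d)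
  have hdc' : (derivative S).coeff (d - 1) ≠ 0 := by
    rw [hdc, hSlc]; positivity
  have hdeg : (derivative S).natDegree = d - 1 :=
    natDegree_eq_of_le_of_coeff_ne_zero (natDegree_derivative_le S) hdc'
  have hlc : 0 < (derivative S).leadingCoeff := by
    rw [Polynomial.leadingCoeff, hdeg, hdc, hSlc]; positivity
  have hdeg1 : 1 ≤ (derivative S).natDegree := by omega
  have hD := keyTendstoR (derivative S) hlc hdeg1
  set f : ℝ → ℝ := fun x => (S.map (Int.castRingHom ℝ)).eval x with hf
  have hmvt : ∀ m : ℕ, ∃ c ∈ Set.Ioo ((m : ℝ)) ((m : ℝ) + 1),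
      ((derivative S).map (Int.castRingHom ℝ)).eval c = f ((m : ℝ) + 1) - f (m : ℝ) := by
    intro m
    have hab : (m : ℝ) < (m : ℝ) + 1 := by linarith
    obtain ⟨c, hc, hcd⟩ := exists_deriv_eq_slope f hab
      ((S.map (Int.castRingHom ℝ)).continuous.continuousOn)
      ((S.map (Int.castRingHom ℝ)).differentiable.differentiableOn)
    refine ⟨c, hc, ?_⟩
    have hder : deriv f c = ((derivative S).map (Int.castRingHom ℝ)).eval c := by
      rw [hf]
      rw [Polynomial.deriv, derivative_map]
    rw [← hder, hcd]
    field_simp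
    ring
  rw [tendsto_atTop]
  intro b
  obtain ⟨x₀, hx₀⟩ := eventually_atTop.1 (hD.eventually_ge_atTop (b : ℝ))
  filter_upwards [eventually_ge_atTop (Nat.ceil x₀)] with m hm
  obtain ⟨c, hc, hcd⟩ := hmvt m
  have hm' : x₀ ≤ (m : ℝ) := Nat.ceil_le.1 hm
  have hb : (b : ℝ) ≤ ((derivative S).map (Int.castRingHom ℝ)).eval c :=
    hx₀ c (le_trans hm' hc.1.le)
  rw [hcd] at hb
  have e1 : f ((m : ℝ) + 1) = ((S.eval ((m : ℤ) + 1) : ℤ) : ℝ) := by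
    show (S.map (Int.castRingHom ℝ)).eval ((m : ℝ) + 1) = _
    rw [show ((m : ℝ) + 1) = (((m : ℤ) + 1 : ℤ) : ℝ) by push_cast; ring, eval_intCast_map]
    rfl
  have e2 : f ((m : ℝ)) = ((S.eval ((m : ℤ)) : ℤ) : ℝ) := by
    show (S.map (Int.castRingHom ℝ)).eval ((m : ℝ)) = _
    rw [show ((m : ℝ)) = (((m : ℤ) : ℤ) : ℝ) by push_cast; ring, eval_intCast_map]
    rfl
  rw [e1, e2] at hb
  have : (b : ℝ) ≤ ((S.eval ((m : ℤ) + 1) - S.eval (m : ℤ) : ℤ) : ℝ) := by push_cast; linarith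
  exact_mod_cast this

lemma natDegree_pos_of_coeff_zero (p : Polynomial ℤ) (hp : p ≠ 0) (h0 : p.coeff 0 = 0) :
    1 ≤ p.natDegree := by
  by_contra h
  have h1 : p.natDegree = 0 := by omega
  have := Polynomial.eq_C_of_natDegree_eq_zero h1
  rw [h0] at this
  simp at this
  exact hp this

/-! ## Main construction -/

lemma exists_good (S T : Polynomial ℤ) (hS : 0 < S.leadingCoeff) (hT : 0 < T.leadingCoeff)
    (hS0 : S.coeff 0 = 0) (hT0 : T.coeff 0 = 0) (hSTlc : 0 < (S - T).leadingCoeff)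
    (hd2 : 2 ≤ S.natDegree) :
    ∃ φ : ℕ → ℕ, (∀ n, φ n = 1 ∨ φ n = 2) ∧
      ∀ n : ℕ, ∃ M : ℕ, ∀ m : ℕ, M ≤ m →
        φ (((n : ℤ) + S.eval (m : ℤ)).toNat) ≠ φ (((n : ℤ) + T.eval (m : ℤ)).toNat) := by
  have hTne : T ≠ 0 := fun h => by simp [h] at hT
  have hSTne : S - T ≠ 0 := leadingCoeff_ne_zero.1 (ne_of_gt hSTlc)
  have hT1 : 1 ≤ T.natDegree := natDegree_pos_of_coeff_zero T hTne hT0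
  have hST1 : 1 ≤ (S - T).natDegree := by
    apply natDegree_pos_of_coeff_zero _ hSTne
    rw [coeff_sub, hS0, hT0]; ring
  have hTendT := keyTendstoZ T hT hT1
  have hTendR := keyTendstoZ (S - T) hSTlc hST1
  have hGap := gapTendsto S hS hd2
  obtain ⟨mT, hmT⟩ := eventually_atTop.1 (hTendT.eventually_ge_atTop 0)
  obtain ⟨mR, hmR⟩ := eventually_atTop.1 (hTendR.eventually_ge_atTop 1)
  have hNex : ∀ k : ℕ, ∃ N : ℕ, ∀ m ≥ N, ((k : ℤ) + 1) ≤ S.eval ((m : ℤ) + 1) - S.eval (m : ℤ) :=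
    fun k => eventually_atTop.1 (hGap.eventually_ge_atTop _)
  choose Nf hNf using hNex
  set ψ : ℕ → ℕ := fun n => max (max n (Nf n)) (max mT mR) with hψ
  have H : HPsi S T ψ := by
    intro n m hm
    rw [hψ] at hm
    simp only [max_le_iff] at hm
    refine ⟨by exact_mod_cast hm.1.1, hmT m hm.2.1, ?_, ?_⟩
    · have := hmR m hm.2.2
      rw [eval_sub] at this
      linarith
    · have := hNf n m hm.1.2
      linarith
  exact ⟨twoCol S T ψ, twoCol_mem H, fun n => ⟨ψ n, fun m hm => twoCol_key H n m hm⟩⟩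

lemma degree_le_of_sub_lc (S T : Polynomial ℤ) (hT : 0 < T.leadingCoeff)
    (hSTlc : 0 < (S - T).leadingCoeff) : T.natDegree ≤ S.natDegree := by
  apply natDegree_le_natDegree
  by_contra hlt
  rw [not_le] at hlt
  have hST : S - T = S + (-T) := by ring
  have hdd : S.degree < (-T).degree := by rwa [degree_neg]
  have := leadingCoeff_add_of_degree_lt hdd
  rw [← hST] at this
  rw [this, leadingCoeff_neg] at hSTlc
  linarith

/-- For distinct `P, Q ∈ ℤ[n]` with positive leading coefficients,
zero constant terms, and `max(deg P, deg Q) > 1`, there is a 2-coloring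
`φ : ℕ → {1,2}` such that for each color `i` and each `n ∈ ℕ` the set
`{m : φ(n + P(m)) = φ(n + Q(m)) = i}` is finite. -/
theorem two_coloring_nonlinear_counterexample (P Q : Polynomial ℤ)
    (hPQ : P ≠ Q) (hP : 0 < P.leadingCoeff) (hQ : 0 < Q.leadingCoeff)
    (hP0 : P.coeff 0 = 0) (hQ0 : Q.coeff 0 = 0)
    (hdeg : 1 < max P.natDegree Q.natDegree) :
    ∃ φ : ℕ → ℕ, (∀ n, φ n = 1 ∨ φ n = 2) ∧
      ∀ i : ℕ, (i = 1 ∨ i = 2) → ∀ n : ℕ,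
        {m : ℕ | φ (((n : ℤ) + P.eval (m : ℤ)).toNat) = i ∧
                 φ (((n : ℤ) + Q.eval (m : ℤ)).toNat) = i}.Finite := by
  have hne : P - Q ≠ 0 := sub_ne_zero.2 hPQ
  have hlcne : (P - Q).leadingCoeff ≠ 0 := leadingCoeff_ne_zero.2 hne
  by_cases hc : 0 < (P - Q).leadingCoeff
  · have hQP := degree_le_of_sub_lc P Q hQ hc
    have hd2 : 2 ≤ P.natDegree := by omega
    obtain ⟨φ, hmem, hkey⟩ := exists_good P Q hP hQ hP0 hQ0 hc hd2
    refine ⟨φ, hmem, fun i _ n => ?_⟩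
    obtain ⟨M, hM⟩ := hkey n
    apply Set.Finite.subset (Set.finite_Iio M)
    intro m hm
    simp only [Set.mem_setOf_eq] at hm
    by_contra hmem2
    simp only [Set.mem_Iio, not_lt] at hmem2
    exact hM m hmem2 (hm.1.trans hm.2.symm)
  · have hlt : (P - Q).leadingCoeff < 0 := lt_of_le_of_ne (not_lt.1 hc) hlcne
    have hc' : 0 < (Q - P).leadingCoeff := by
      rw [show Q - P = -(P - Q) by ring, leadingCoeff_neg]
      linarith
    have hPQ' := degree_le_of_sub_lc Q P hP hc'
    have hd2 : 2 ≤ Q.natDegree := by omega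
    obtain ⟨φ, hmem, hkey⟩ := exists_good Q P hQ hP hQ0 hP0 hc' hd2
    refine ⟨φ, hmem, fun i _ n => ?_⟩
    obtain ⟨M, hM⟩ := hkey n
    apply Set.Finite.subset (Set.finite_Iio M)
    intro m hm
    simp only [Set.mem_setOf_eq] at hm
    by_contra hmem2
    simp only [Set.mem_Iio, not_lt] at hmem2
    exact hM m hmem2 (hm.2.trans hm.1.symm)
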